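/- In the bracket expression, Σ_{l=1}^n ( ∏_{j ∈ [n]∖{l}, i ∈ [n]∖{j}} [α_i, α_j] · ∏_{k ∈ [n−2]} [β_k, α_l] ) = 0 for any vectors α_1,…,α_n, β_1,…,β_{n−2} ∈ k². -/

import Mathlib

open Finset

/-- The bracket `[u,v] = u₀v₁ - v₀u₁`. -/
def bracket {k : Type*} [CommRing k] (u v : Fin 2 → k) : k := u 0 * v 1 - v 0 * u 1

lemma bracket_self {k : Type*} [CommRing k] (u : Fin 2 → k) : bracket u u = 0 := by
  simp [bracket, mul_comm]

lemma bracket_skew {k : Type*} [CommRing k] (u v : Fin 2 → k) :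
    bracket u v = - bracket v u := by
  unfold bracket; ring

/-- Plücker relation. -/
lemma bracket_plucker {k : Type*} [CommRing k] (u v b x : Fin 2 → k) :
    bracket u v * bracket b x = bracket b v * bracket u x + bracket u b * bracket v x := by
  unfold bracket; ring

/-- The key Lagrange-type identity. -/
lemma key_lemma {k : Type*} [Field k] {ι : Type*} [DecidableEq ι] (m : ℕ) :
    ∀ (s : Finset ι) (α : ι → Fin 2 → k) (β : Fin m → Fin 2 → k),
      s.card = m + 2 →
      (∀ i ∈ s, ∀ j ∈ s, i ≠ j → bracket (α i) (α j) ≠ 0) →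
      ∑ l ∈ s, (∏ t : Fin m, bracket (β t) (α l)) *
        ∏ j ∈ s.erase l, (bracket (α l) (α j))⁻¹ = 0 := by
  induction m with
  | zero =>
    intro s α β hcard hnz
    obtain ⟨p, q, hpq, rfl⟩ := Finset.card_eq_two.mp hcard
    have hqp : q ≠ p := hpq.symm
    rw [Finset.sum_pair hpq]
    have h1 : ({p, q} : Finset ι).erase p = {q} := by
      rw [Finset.erase_insert (by simp [hpq])]
    have h2 : ({p, q} : Finset ι).erase q = {p} := by
      rw [Finset.pair_comm, Finset.erase_insert (by simp [hqp])]
    rw [h1, h2]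
    simp only [Finset.prod_singleton, Finset.univ_eq_empty, Finset.prod_empty, one_mul]
    rw [bracket_skew (α q) (α p), inv_neg]
    ring
  | succ m ih =>
    intro s α β hcard hnz
    have h2 : 1 < s.card := by omega
    obtain ⟨p, hp, q, hq, hpq⟩ := Finset.one_lt_card.mp h2
    have hdne : bracket (α p) (α q) ≠ 0 := hnz p hp q hq hpq
    set d := bracket (α p) (α q) with hd
    set a := bracket (β 0) (α q) / d with ha
    set c := bracket (α p) (β 0) / d with hc
    have hdecomp : ∀ x : Fin 2 → k,
        bracket (β 0) x = a * bracket (α p) x + c * bracket (α q) x := by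
      intro x
      rw [ha, hc, div_mul_eq_mul_div, div_mul_eq_mul_div, ← add_div,
        eq_div_iff hdne, mul_comm (bracket (β 0) x) d, hd, bracket_plucker]
    -- the shifted sum vanishes for any r ∈ s
    have hshift : ∀ r ∈ s, ∑ l ∈ s, bracket (α r) (α l) *
        ((∏ t : Fin m, bracket (β t.succ) (α l)) *
          ∏ j ∈ s.erase l, (bracket (α l) (α j))⁻¹) = 0 := by
      intro r hr
      rw [← Finset.sum_erase_add _ _ hr, bracket_self, zero_mul, add_zero]
      have hrw : ∀ l ∈ s.erase r, bracket (α r) (α l) *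
          ((∏ t : Fin m, bracket (β t.succ) (α l)) *
            ∏ j ∈ s.erase l, (bracket (α l) (α j))⁻¹) =
          -((∏ t : Fin m, bracket (β t.succ) (α l)) *
            ∏ j ∈ (s.erase r).erase l, (bracket (α l) (α j))⁻¹) := by
        intro l hl
        have hlr : l ≠ r := (Finset.mem_erase.mp hl).1
        have hls : l ∈ s := (Finset.mem_erase.mp hl).2
        have hrmem : r ∈ s.erase l := Finset.mem_erase.mpr ⟨hlr.symm, hr⟩
        rw [← Finset.mul_prod_erase _ _ hrmem, Finset.erase_right_comm]
        have hlrne : bracket (α l) (α r) ≠ 0 := hnz l hls r hr hlr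
        rw [bracket_skew (α r) (α l)]
        calc -bracket (α l) (α r) * ((∏ t : Fin m, bracket (β t.succ) (α l)) *
              ((bracket (α l) (α r))⁻¹ *
                ∏ x ∈ (s.erase r).erase l, (bracket (α l) (α x))⁻¹)) =
            -((bracket (α l) (α r) * (bracket (α l) (α r))⁻¹) *
              ((∏ t : Fin m, bracket (β t.succ) (α l)) *
                ∏ x ∈ (s.erase r).erase l, (bracket (α l) (α x))⁻¹)) := by ring
          _ = -((∏ t : Fin m, bracket (β t.succ) (α l)) *
                ∏ j ∈ (s.erase r).erase l, (bracket (α l) (α j))⁻¹) := by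
              rw [mul_inv_cancel₀ hlrne, one_mul]
      rw [Finset.sum_congr rfl hrw, Finset.sum_neg_distrib]
      rw [ih (s.erase r) α (fun t => β t.succ)
        (by rw [Finset.card_erase_of_mem hr]; omega)
        (fun i hi j hj hij => hnz i (Finset.mem_of_mem_erase hi) j
          (Finset.mem_of_mem_erase hj) hij)]
      ring
    have hsplit : ∀ l ∈ s, (∏ t : Fin (m + 1), bracket (β t) (α l)) *
        ∏ j ∈ s.erase l, (bracket (α l) (α j))⁻¹ =
        a * (bracket (α p) (α l) * ((∏ t : Fin m, bracket (β t.succ) (α l)) *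
          ∏ j ∈ s.erase l, (bracket (α l) (α j))⁻¹)) +
        c * (bracket (α q) (α l) * ((∏ t : Fin m, bracket (β t.succ) (α l)) *
          ∏ j ∈ s.erase l, (bracket (α l) (α j))⁻¹)) := by
      intro l _
      rw [Fin.prod_univ_succ, hdecomp (α l)]
      ring
    rw [Finset.sum_congr rfl hsplit, Finset.sum_add_distrib, ← Finset.mul_sum,
      ← Finset.mul_sum, hshift p hp, hshift q hq, mul_zero, mul_zero, add_zero]

/-- The bracket-polynomial form of `DR_{n,1} = 0`:
`Σ_{l=1}^n ( ∏_{j ≠ l, i ≠ j} [αᵢ,αⱼ] · ∏_k [βₖ,αₗ] ) = 0` for any vectors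
`α₁,…,αₙ, β₁,…,β_{n-2} ∈ k²`. -/
theorem bracket_sum_eq_zero {k : Type*} [Field k] [CharZero k] (n : ℕ) (hn : 2 ≤ n)
    (α : Fin n → Fin 2 → k) (β : Fin (n - 2) → Fin 2 → k) :
    ∑ l : Fin n,
      ((∏ j ∈ Finset.univ.erase l, ∏ i ∈ Finset.univ.erase j, bracket (α i) (α j)) *
        ∏ m : Fin (n - 2), bracket (β m) (α l)) = 0 := by
  by_cases hex : ∃ i j : Fin n, i ≠ j ∧ bracket (α i) (α j) = 0
  · obtain ⟨i, j, hij, h0⟩ := hex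
    apply Finset.sum_eq_zero
    intro l _
    rcases eq_or_ne j l with rfl | hjl
    · have h1 : i ∈ Finset.univ.erase j := Finset.mem_erase.mpr ⟨hij, mem_univ i⟩
      have h2 : j ∈ Finset.univ.erase i := Finset.mem_erase.mpr ⟨hij.symm, mem_univ j⟩
      rw [Finset.prod_eq_zero h1 (Finset.prod_eq_zero h2
        (by rw [bracket_skew, h0, neg_zero])), zero_mul]
    · have h1 : j ∈ Finset.univ.erase l := Finset.mem_erase.mpr ⟨hjl, mem_univ j⟩
      have h2 : i ∈ Finset.univ.erase j := Finset.mem_erase.mpr ⟨hij, mem_univ i⟩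
      rw [Finset.prod_eq_zero h1 (Finset.prod_eq_zero h2 h0), zero_mul]
  · push_neg at hex
    have hnz : ∀ i ∈ (Finset.univ : Finset (Fin n)), ∀ j ∈ (Finset.univ : Finset (Fin n)),
        i ≠ j → bracket (α i) (α j) ≠ 0 := fun i _ j _ hij => hex i j hij
    have hkey := key_lemma (n - 2) (Finset.univ : Finset (Fin n)) α β
      (by simp [Finset.card_univ]; omega) hnz
    set C := ∏ j : Fin n, ∏ i ∈ Finset.univ.erase j, bracket (α i) (α j) with hC
    have hterm : ∀ l ∈ (Finset.univ : Finset (Fin n)),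
        (∏ j ∈ Finset.univ.erase l, ∏ i ∈ Finset.univ.erase j, bracket (α i) (α j)) *
          ∏ m : Fin (n - 2), bracket (β m) (α l) =
        ((-1 : k) ^ (n - 1) * C) * ((∏ m : Fin (n - 2), bracket (β m) (α l)) *
          ∏ j ∈ Finset.univ.erase l, (bracket (α l) (α j))⁻¹) := by
      intro l _
      set P := ∏ j ∈ Finset.univ.erase l, ∏ i ∈ Finset.univ.erase j, bracket (α i) (α j)
      set Q := ∏ m : Fin (n - 2), bracket (β m) (α l)
      set D := ∏ j ∈ Finset.univ.erase l, bracket (α l) (α j) with hD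
      have hDne : D ≠ 0 := Finset.prod_ne_zero_iff.mpr fun j hj =>
        hnz l (mem_univ l) j (mem_univ j) (Finset.mem_erase.mp hj).1.symm
      have hCeq : C = ((-1 : k) ^ (n - 1) * D) * P := by
        rw [hC, ← Finset.mul_prod_erase _ _ (mem_univ l)]
        congr 1
        have : ∏ i ∈ Finset.univ.erase l, bracket (α i) (α l) =
            ∏ i ∈ Finset.univ.erase l, (-1) * bracket (α l) (α i) := by
          refine Finset.prod_congr rfl fun i _ => ?_
          rw [bracket_skew]; ring
        rw [this, Finset.prod_mul_distrib, Finset.prod_const, hD,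
          Finset.card_erase_of_mem (mem_univ l), Finset.card_univ, Fintype.card_fin]
      have hone : ((-1 : k) ^ (n - 1)) * (-1) ^ (n - 1) = 1 := by
        rw [← mul_pow]; norm_num
      rw [Finset.prod_inv_distrib, ← hD, hCeq]
      calc P * Q = (((-1 : k) ^ (n - 1)) * (-1) ^ (n - 1)) * (D * D⁻¹) * (P * Q) := by
            rw [hone, mul_inv_cancel₀ hDne]; ring
        _ = (-1 : k) ^ (n - 1) * ((-1) ^ (n - 1) * D * P) * (Q * D⁻¹) := by ring
    rw [Finset.sum_congr rfl hterm, ← Finset.mul_sum, hkey, mul_zero]
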